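/- Let A, B : X → Y be bounded linear operators between Hilbert spaces with closed image, where A is injective. If ‖A†‖·‖A−B‖ < 1, where A† = (A*A)^{-1}A* is the Moore–Penrose inverse, then B is injective and ‖B†‖ ≤ ‖A†‖ / (1 − ‖A†‖·‖A−B‖). -/

import Mathlib

/-- Moore–Penrose inverse of an injective closed-range operator: A† = (A*A)⁻¹ A*. -/
noncomputable def pinv {X Y : Type*} [NormedAddCommGroup X] [InnerProductSpace ℝ X]
    [CompleteSpace X] [NormedAddCommGroup Y] [InnerProductSpace ℝ Y] [CompleteSpace Y]
    (A : X →L[ℝ] Y) : Y →L[ℝ] X :=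
  (Ring.inverse ((ContinuousLinearMap.adjoint A).comp A)).comp (ContinuousLinearMap.adjoint A)

open ContinuousLinearMap in
/-- If `B` is bounded below (with constant `M⁻¹`), then `B* B` is invertible,
`pinv B` is a left inverse of `B`, and `‖pinv B y‖ ≤ M * ‖y‖`. -/
lemma pinv_key {X Y : Type*} [NormedAddCommGroup X] [InnerProductSpace ℝ X]
    [CompleteSpace X] [NormedAddCommGroup Y] [InnerProductSpace ℝ Y] [CompleteSpace Y]
    (B : X →L[ℝ] Y) (M : ℝ) (hM0 : 0 ≤ M) (hM : ∀ x, ‖x‖ ≤ M * ‖B x‖) :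
    (∀ x, pinv B (B x) = x) ∧ ∀ y, ‖pinv B y‖ ≤ M * ‖y‖ := by
  set T : X →L[ℝ] X := (adjoint B).comp B with hT
  have hTinner : ∀ x : X, (inner ℝ (T x) x : ℝ) = ‖B x‖ ^ 2 := by
    intro x
    have : (inner ℝ ((adjoint B) (B x)) x : ℝ) = inner ℝ (B x) (B x) :=
      adjoint_inner_left B x (B x)
    simpa [hT, real_inner_self_eq_norm_sq] using this
  -- T is bounded below
  have hTlow : ∀ x : X, ‖x‖ ≤ M ^ 2 * ‖T x‖ := by
    intro x
    rcases eq_or_lt_of_le (norm_nonneg x) with h0 | h0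
    · rw [← h0]; positivity
    have h1 : ‖x‖ ^ 2 ≤ M ^ 2 * ‖B x‖ ^ 2 := by
      have := hM x
      calc ‖x‖ ^ 2 ≤ (M * ‖B x‖) ^ 2 := by
            apply sq_le_sq' <;> nlinarith [norm_nonneg x]
        _ = M ^ 2 * ‖B x‖ ^ 2 := by ring
    have h2 : ‖B x‖ ^ 2 ≤ ‖T x‖ * ‖x‖ := by
      rw [← hTinner x]; exact real_inner_le_norm (T x) x
    have : ‖x‖ * ‖x‖ ≤ (M ^ 2 * ‖T x‖) * ‖x‖ := by nlinarith
    exact le_of_mul_le_mul_right (by nlinarith) h0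
  have hTzero : ∀ x : X, T x = 0 → x = 0 := by
    intro x hx
    have := hTlow x
    rw [hx, norm_zero, mul_zero] at this
    exact norm_le_zero_iff.mp this
  -- T has closed range
  have hanti : AntilipschitzWith (M ^ 2).toNNReal T := by
    apply T.antilipschitz_of_bound
    intro x
    have := hTlow x
    rwa [Real.coe_toNNReal _ (by positivity)]
  have hclosed : IsClosed (Set.range (T : X → X)) :=
    hanti.isClosed_range T.uniformContinuous
  -- T is surjective
  have hrange : LinearMap.range (T : X →ₗ[ℝ] X) = ⊤ := by
    have horth : (LinearMap.range (T : X →ₗ[ℝ] X))ᗮ = ⊥ := by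
      rw [Submodule.eq_bot_iff]
      intro v hv
      have h1 : (inner ℝ (T v) v : ℝ) = 0 := by
        exact (Submodule.mem_orthogonal _ v).mp hv (T v) (LinearMap.mem_range_self _ v)
      have h2 : ‖B v‖ ^ 2 = 0 := by rw [← hTinner v, h1]
      have h3 : ‖v‖ ≤ 0 := by
        have := hM v
        have : ‖B v‖ = 0 := by nlinarith [norm_nonneg (B v)]
        nlinarith [hM v]
      exact norm_le_zero_iff.mp h3
    have hcl : (LinearMap.range (T : X →ₗ[ℝ] X)).topologicalClosure = LinearMap.range (T : X →ₗ[ℝ] X) := by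
      apply IsClosed.submodule_topologicalClosure_eq
      simpa [LinearMap.coe_range] using hclosed
    have := (LinearMap.range (T : X →ₗ[ℝ] X)).orthogonal_orthogonal_eq_closure
    rw [horth, Submodule.bot_orthogonal_eq_top, hcl] at this
    exact this.symm
  have hker : LinearMap.ker (T : X →ₗ[ℝ] X) = ⊥ := by
    rw [Submodule.eq_bot_iff]; exact fun x hx => hTzero x hx
  -- T is a unit
  set e := ContinuousLinearEquiv.ofBijective T hker hrange with he
  have hTu : IsUnit T := by
    refine ⟨⟨T, (e.symm : X →L[ℝ] X), ?_, ?_⟩, rfl⟩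
    · ext x
      simp [ContinuousLinearMap.mul_apply, he,
        ContinuousLinearEquiv.ofBijective_apply_symm_apply]
    · ext x
      simp [ContinuousLinearMap.mul_apply, he,
        ContinuousLinearEquiv.ofBijective_symm_apply_apply]
  have hinvT : Ring.inverse T * T = 1 := Ring.inverse_mul_cancel T hTu
  have hTinv : T * Ring.inverse T = 1 := Ring.mul_inverse_cancel T hTu
  constructor
  · intro x
    have : pinv B (B x) = (Ring.inverse T * T) x := rfl
    rw [this, hinvT]; rfl
  · intro y
    set x := pinv B y with hx
    have hTx : T x = (adjoint B) y := by
      have : T x = (T * Ring.inverse T) ((adjoint B) y) := rfl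
      rw [this, hTinv]; rfl
    have hBx : ‖B x‖ ≤ ‖y‖ := by
      rcases eq_or_lt_of_le (norm_nonneg (B x)) with h0 | h0
      · rw [← h0]; exact norm_nonneg y
      have h1 : ‖B x‖ ^ 2 = inner ℝ y (B x) := by
        rw [← hTinner x, hTx]; exact adjoint_inner_left B x y
      have h2 : (inner ℝ y (B x) : ℝ) ≤ ‖y‖ * ‖B x‖ := real_inner_le_norm y (B x)
      have : ‖B x‖ * ‖B x‖ ≤ ‖y‖ * ‖B x‖ := by nlinarith
      exact le_of_mul_le_mul_right this h0
    calc ‖x‖ ≤ M * ‖B x‖ := hM x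
      _ ≤ M * ‖y‖ := by nlinarith

/-- An injective operator with closed range is bounded below. -/
lemma exists_bound {X Y : Type*} [NormedAddCommGroup X] [InnerProductSpace ℝ X]
    [CompleteSpace X] [NormedAddCommGroup Y] [InnerProductSpace ℝ Y] [CompleteSpace Y]
    (B : X →L[ℝ] Y) (hclosed : IsClosed (Set.range (B : X → Y)))
    (hinj : Function.Injective (B : X → Y)) :
    ∃ M : ℝ, 0 ≤ M ∧ ∀ x, ‖x‖ ≤ M * ‖B x‖ := by
  set p : Submodule ℝ Y := LinearMap.range (B : X →ₗ[ℝ] Y) with hp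
  have hpc : IsClosed (p : Set Y) := by simpa [hp, LinearMap.coe_range] using hclosed
  haveI : CompleteSpace p := hpc.completeSpace_coe
  set f : X →L[ℝ] p := B.codRestrict p (fun x => LinearMap.mem_range_self _ x) with hf
  have hker : LinearMap.ker (f : X →ₗ[ℝ] p) = ⊥ := by
    rw [Submodule.eq_bot_iff]
    intro x hx
    have : B x = 0 := by
      have := congrArg Subtype.val (hx : f x = 0)
      simpa [hf] using this
    exact hinj (by simpa using this)
  have hrange : LinearMap.range (f : X →ₗ[ℝ] p) = ⊤ := by
    rw [Submodule.eq_top_iff']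
    rintro ⟨y, hy⟩
    obtain ⟨x, hx⟩ := hy
    exact ⟨x, by ext; simpa [hf] using hx⟩
  set e := ContinuousLinearEquiv.ofBijective f hker hrange with he
  refine ⟨‖(e.symm : p →L[ℝ] X)‖, norm_nonneg _, fun x => ?_⟩
  have h1 : x = e.symm (f x) := (ContinuousLinearEquiv.ofBijective_symm_apply_apply f hker hrange x).symm
  calc ‖x‖ = ‖e.symm (f x)‖ := by rw [← h1]
    _ ≤ ‖(e.symm : p →L[ℝ] X)‖ * ‖f x‖ := (e.symm : p →L[ℝ] X).le_opNorm (f x)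
    _ = ‖(e.symm : p →L[ℝ] X)‖ * ‖B x‖ := rfl

theorem stmt0 {X Y : Type*} [NormedAddCommGroup X] [InnerProductSpace ℝ X] [CompleteSpace X]
    [NormedAddCommGroup Y] [InnerProductSpace ℝ Y] [CompleteSpace Y]
    (A B : X →L[ℝ] Y)
    (hAclosed : IsClosed (Set.range (A : X → Y)))
    (hBclosed : IsClosed (Set.range (B : X → Y)))
    (hAinj : Function.Injective (A : X → Y))
    (h : ‖pinv A‖ * ‖A - B‖ < 1) :
    Function.Injective (B : X → Y) ∧
      ‖pinv B‖ ≤ ‖pinv A‖ / (1 - ‖pinv A‖ * ‖A - B‖) := by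
  obtain ⟨MA, hMA0, hMA⟩ := exists_bound A hAclosed hAinj
  obtain ⟨hAid, -⟩ := pinv_key A MA hMA0 hMA
  set α := ‖pinv A‖ with hα
  set β := ‖A - B‖ with hβ
  set d := 1 - α * β with hd
  have hd0 : 0 < d := by simp only [hd]; linarith
  have hα0 : 0 ≤ α := norm_nonneg _
  have hβ0 : 0 ≤ β := norm_nonneg _
  have hAbelow : ∀ x, ‖x‖ ≤ α * ‖A x‖ := by
    intro x
    calc ‖x‖ = ‖pinv A (A x)‖ := by rw [hAid x]
      _ ≤ α * ‖A x‖ := (pinv A).le_opNorm (A x)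
  have hBbelow : ∀ x, ‖x‖ ≤ (α / d) * ‖B x‖ := by
    intro x
    have h1 : ‖A x‖ ≤ ‖(A - B) x‖ + ‖B x‖ := by
      calc ‖A x‖ = ‖(A - B) x + B x‖ := by simp
        _ ≤ ‖(A - B) x‖ + ‖B x‖ := norm_add_le _ _
    have h2 : ‖(A - B) x‖ ≤ β * ‖x‖ := (A - B).le_opNorm x
    have h3 : ‖x‖ ≤ α * (β * ‖x‖ + ‖B x‖) := by
      calc ‖x‖ ≤ α * ‖A x‖ := hAbelow x
        _ ≤ α * (β * ‖x‖ + ‖B x‖) := by nlinarith [norm_nonneg (B x)]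
    have h4 : d * ‖x‖ ≤ α * ‖B x‖ := by simp only [hd]; nlinarith
    rw [div_mul_eq_mul_div, le_div_iff₀ hd0, mul_comm (‖x‖) d]
    linarith
  have hBinj : Function.Injective (B : X → Y) := by
    intro a b hab
    have h0 : B (a - b) = 0 := by rw [map_sub, hab, sub_self]
    have := hBbelow (a - b)
    rw [h0, norm_zero, mul_zero] at this
    exact sub_eq_zero.mp (norm_le_zero_iff.mp this)
  obtain ⟨-, hBle⟩ := pinv_key B (α / d) (div_nonneg hα0 hd0.le) hBbelow
  exact ⟨hBinj, ContinuousLinearMap.opNorm_le_bound _ (div_nonneg hα0 hd0.le) hBle⟩
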